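/- Hopf lemma quantitative form: let r₀, c₀, C₀ > 0, α ∈ (0,1), and let u be a positive C² function on B_{r₀}(0) ∩ {x : x_d > C₀|x'|^{1+α}} with Δu ≤ -c₀ < 0 and u(0) = 0 (writing x = (x', x_d)). Then there exist ε, δ > 0 depending only on d, α, r₀, c₀, C₀ such that u(h e_d) ≥ ε h for all h ∈ (0, δ). -/

import Mathlib

open MeasureTheory Metric Set Filter

set_option maxHeartbeats 1600000

/-- Laplacian as the sum of second partial derivatives. -/
noncomputable def lap {d : ℕ} (u : EuclideanSpace ℝ (Fin d) → ℝ)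
    (x : EuclideanSpace ℝ (Fin d)) : ℝ :=
  ∑ i, fderiv ℝ (fun y => fderiv ℝ u y (EuclideanSpace.single i 1)) x
    (EuclideanSpace.single i 1)

/-- The region above the graph `x_d = C₀ |x'|^{1+α}` inside the ball of radius `r₀`. -/
def hopfDomain (d : ℕ) (r₀ C₀ α : ℝ) : Set (EuclideanSpace ℝ (Fin (d + 1))) :=
  {x | x ∈ Metric.ball 0 r₀ ∧
    C₀ * (Real.sqrt (∑ i : Fin d, x (Fin.castSucc i) ^ 2)) ^ (1 + α) < x (Fin.last d)}

lemma deriv2_nonneg_of_isLocalMin {f : ℝ → ℝ} (hf : ContDiffAt ℝ 2 f 0)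
    (hmin : IsLocalMin f 0) : 0 ≤ deriv (deriv f) 0 := by
  by_contra hlt
  push_neg at hlt
  obtain ⟨s, hs, hfs⟩ := hf.contDiffOn (le_refl 2) (by simp)
  obtain ⟨r, hr, hball⟩ := Metric.mem_nhds_iff.1 hs
  have hop : IsOpen (Metric.ball (0:ℝ) r) := Metric.isOpen_ball
  have hfb : ContDiffOn ℝ 2 f (Metric.ball (0:ℝ) r) := hfs.mono hball
  have hfb' : ContDiffOn ℝ (1+1) f (Metric.ball (0:ℝ) r) := by norm_num at hfb ⊢; exact hfb
  rw [contDiffOn_succ_iff_deriv_of_isOpen hop] at hfb'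
  have hdf : DifferentiableOn ℝ f (Metric.ball (0:ℝ) r) := hfb'.1
  have hdfC1 : ContDiffOn ℝ 1 (deriv f) (Metric.ball (0:ℝ) r) := hfb'.2.2
  have h0mem : (0:ℝ) ∈ Metric.ball (0:ℝ) r := Metric.mem_ball_self hr
  have hd0 : deriv f 0 = 0 := hmin.deriv_eq_zero
  have hdd : HasDerivAt (deriv f) (deriv (deriv f) 0) 0 :=
    ((hdfC1.contDiffAt (hop.mem_nhds h0mem)).differentiableAt one_ne_zero).hasDerivAt
  have hslope := hasDerivAt_iff_tendsto_slope.1 hdd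
  have hev : ∀ᶠ t in nhdsWithin (0:ℝ) (Set.Ioi 0), deriv f t < 0 := by
    have h1 : ∀ᶠ t in nhdsWithin (0:ℝ) {(0:ℝ)}ᶜ, slope (deriv f) 0 t < 0 :=
      hslope.eventually (gt_mem_nhds hlt)
    have h2 : ∀ᶠ t in nhdsWithin (0:ℝ) (Set.Ioi 0), slope (deriv f) 0 t < 0 :=
      h1.filter_mono (nhdsWithin_mono _ (fun t ht => ne_of_gt ht))
    filter_upwards [h2, self_mem_nhdsWithin] with t ht ht0
    have ht0' : (0:ℝ) < t := ht0
    have hsl : slope (deriv f) 0 t = deriv f t / t := by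
      simp [slope_def_field, hd0]
    rw [hsl] at ht
    have := mul_neg_of_neg_of_pos ht ht0'
    rwa [div_mul_cancel₀ _ (ne_of_gt ht0')] at this
  obtain ⟨t₁, ht₁, hIoo⟩ := mem_nhdsGT_iff_exists_Ioo_subset.1 hev
  have ht₁' : (0:ℝ) < t₁ := ht₁
  obtain ⟨ε, hε, hmin'⟩ := Metric.eventually_nhds_iff.1 hmin
  set t := min (min (t₁/2) (r/2)) (ε/2) with htdef
  have htpos : 0 < t := by positivity
  have h₁ : t ≤ t₁/2 := le_trans (min_le_left _ _) (min_le_left _ _)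
  have h₂ : t ≤ r/2 := le_trans (min_le_left _ _) (min_le_right _ _)
  have h₃ : t ≤ ε/2 := min_le_right _ _
  have hsub : Set.Icc (0:ℝ) t ⊆ Metric.ball (0:ℝ) r := by
    intro y hy
    rw [Real.ball_eq_Ioo]
    constructor
    · simp only [zero_sub]; linarith [hy.1]
    · simp only [zero_add]; linarith [hy.2]
  have hanti : StrictAntiOn f (Set.Icc (0:ℝ) t) := by
    apply strictAntiOn_of_deriv_neg (convex_Icc _ _)
    · exact (hdf.mono hsub).continuousOn
    · intro y hy
      rw [interior_Icc] at hy
      exact hIoo ⟨hy.1, by linarith [hy.2]⟩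
  have hft : f t < f 0 := hanti ⟨le_rfl, le_of_lt htpos⟩ ⟨le_of_lt htpos, le_rfl⟩ htpos
  have : f 0 ≤ f t := hmin' (by rw [Real.dist_eq, sub_zero, abs_of_pos htpos]; linarith)
  linarith

lemma slice_second_deriv {E : Type*} [NormedAddCommGroup E] [NormedSpace ℝ E]
    {g : E → ℝ} {x : E} (w : E) (hg : ContDiffAt ℝ 2 g x) :
    fderiv ℝ (fun y => fderiv ℝ g y w) x w = deriv (deriv (fun t : ℝ => g (x + t • w))) 0 := by
  obtain ⟨s, hs, hgs⟩ := hg.contDiffOn (le_refl 2) (by simp)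
  obtain ⟨r, hr, hball⟩ := Metric.mem_nhds_iff.1 hs
  set L : ℝ → E := fun t => x + t • w with hL
  have hLd : ∀ t : ℝ, HasDerivAt L w t := by
    intro t
    have h1 : HasDerivAt (fun τ : ℝ => τ • w) ((1:ℝ) • w) t := (hasDerivAt_id t).smul_const w
    have h2 := h1.const_add x
    rw [one_smul] at h2
    exact h2
  have hLcont : Continuous L := by fun_prop
  have hU : L ⁻¹' (Metric.ball x r) ∈ nhds (0:ℝ) := by
    apply (hLcont.isOpen_preimage _ Metric.isOpen_ball).mem_nhds
    simp [hL, hr]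
  have hgc : ∀ᶠ t in nhds (0:ℝ), ContDiffAt ℝ 2 g (L t) := by
    filter_upwards [hU] with t ht
    exact (hgs.mono hball).contDiffAt (Metric.isOpen_ball.mem_nhds ht)
  have hderiv1 : ∀ᶠ t in nhds (0:ℝ), deriv (fun τ : ℝ => g (L τ)) t = fderiv ℝ g (L t) w := by
    filter_upwards [hgc] with t ht
    have hgd : HasFDerivAt g (fderiv ℝ g (L t)) (L t) :=
      (ht.differentiableAt (by norm_num)).hasFDerivAt
    exact (hgd.comp_hasDerivAt t (hLd t)).deriv
  have hstep : deriv (deriv (fun t : ℝ => g (x + t • w))) 0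
      = deriv (fun t : ℝ => fderiv ℝ g (L t) w) 0 := by
    apply Filter.EventuallyEq.deriv_eq
    exact hderiv1
  rw [hstep]
  -- now compute the derivative of t ↦ fderiv g (L t) w at 0
  have hF : ContDiffAt ℝ 1 (fderiv ℝ g) x := hg.fderiv_right (by norm_num)
  have hFd : HasFDerivAt (fderiv ℝ g) (fderiv ℝ (fderiv ℝ g) x) x :=
    (hF.differentiableAt one_ne_zero).hasFDerivAt
  have happ : HasFDerivAt (fun y => fderiv ℝ g y w)
      ((ContinuousLinearMap.apply ℝ ℝ w).comp (fderiv ℝ (fderiv ℝ g) x)) x :=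
    ((ContinuousLinearMap.apply ℝ ℝ w).hasFDerivAt).comp x hFd
  have hcomp : HasDerivAt (fun t : ℝ => fderiv ℝ g (L t) w)
      (((ContinuousLinearMap.apply ℝ ℝ w).comp (fderiv ℝ (fderiv ℝ g) x)) w) 0 := by
    have happ' : HasFDerivAt (fun y => fderiv ℝ g y w)
        ((ContinuousLinearMap.apply ℝ ℝ w).comp (fderiv ℝ (fderiv ℝ g) x)) (L 0) := by
      simpa [hL] using happ
    exact happ'.comp_hasDerivAt (0:ℝ) (hLd 0)
  rw [hcomp.deriv, happ.fderiv]

lemma contDiffAt_slice {E : Type*} [NormedAddCommGroup E] [NormedSpace ℝ E]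
    {g : E → ℝ} {x : E} (w : E) (hg : ContDiffAt ℝ 2 g x) :
    ContDiffAt ℝ 2 (fun t : ℝ => g (x + t • w)) 0 := by
  have hline : ContDiffAt ℝ 2 (fun t : ℝ => x + t • w) 0 :=
    (contDiffAt_const.add (contDiffAt_id.smul contDiffAt_const))
  have hgx : ContDiffAt ℝ 2 g ((fun t : ℝ => x + t • w) 0) := by simpa using hg
  exact hgx.comp 0 hline

lemma lap_eq_sum_slice {d : ℕ} {g : EuclideanSpace ℝ (Fin d) → ℝ}
    {x : EuclideanSpace ℝ (Fin d)} (hg : ContDiffAt ℝ 2 g x) :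
    lap g x = ∑ i, deriv (deriv (fun t : ℝ => g (x + t • EuclideanSpace.single i 1))) 0 := by
  unfold lap
  exact Finset.sum_congr rfl fun i _ => slice_second_deriv _ hg

lemma lap_nonneg_of_isLocalMin {d : ℕ} {g : EuclideanSpace ℝ (Fin d) → ℝ}
    {x : EuclideanSpace ℝ (Fin d)} (hg : ContDiffAt ℝ 2 g x) (hmin : IsLocalMin g x) :
    0 ≤ lap g x := by
  rw [lap_eq_sum_slice hg]
  apply Finset.sum_nonneg
  intro i _
  apply deriv2_nonneg_of_isLocalMin (contDiffAt_slice _ hg)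
  have hc : ContinuousAt (fun t : ℝ => x + t • EuclideanSpace.single i 1) 0 := by fun_prop
  have h0 : (fun t : ℝ => x + t • EuclideanSpace.single i 1) 0 = x := by simp
  unfold IsLocalMin IsMinFilter at hmin ⊢
  have h2 : Tendsto (fun t : ℝ => x + t • EuclideanSpace.single i 1) (nhds 0) (nhds x) := by
    simpa using hc.tendsto
  filter_upwards [h2.eventually hmin] with t ht
  simpa using ht

lemma differentiableAt_deriv_of_contDiffAt {f : ℝ → ℝ} {t : ℝ} (hf : ContDiffAt ℝ 2 f t) :
    DifferentiableAt ℝ (deriv f) t := by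
  obtain ⟨s, hs, hfs⟩ := hf.contDiffOn (le_refl 2) (by simp)
  obtain ⟨r, hr, hball⟩ := Metric.mem_nhds_iff.1 hs
  have hop : IsOpen (Metric.ball t r) := Metric.isOpen_ball
  have hfb : ContDiffOn ℝ (1+1) f (Metric.ball t r) := by
    have := hfs.mono hball; norm_num at this ⊢; exact this
  rw [contDiffOn_succ_iff_deriv_of_isOpen hop] at hfb
  exact (hfb.2.2.contDiffAt (hop.mem_nhds (Metric.mem_ball_self hr))).differentiableAt one_ne_zero

lemma deriv2_sub_smul {f g : ℝ → ℝ} (c : ℝ) (hf : ContDiffAt ℝ 2 f 0) (hg : ContDiffAt ℝ 2 g 0) :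
    deriv (deriv (fun t => f t - c * g t)) 0 = deriv (deriv f) 0 - c * deriv (deriv g) 0 := by
  obtain ⟨s, hs, hfs⟩ := hf.contDiffOn (le_refl 2) (by simp)
  obtain ⟨s', hs', hgs⟩ := hg.contDiffOn (le_refl 2) (by simp)
  obtain ⟨r, hr, hball⟩ := Metric.mem_nhds_iff.1 (inter_mem hs hs')
  have hop : IsOpen (Metric.ball (0:ℝ) r) := Metric.isOpen_ball
  have hfd : ∀ t ∈ Metric.ball (0:ℝ) r, DifferentiableAt ℝ f t := fun t ht =>
    (((hfs.mono (fun y hy => (hball hy).1)).contDiffAt (hop.mem_nhds ht))).differentiableAt (by norm_num)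
  have hgd : ∀ t ∈ Metric.ball (0:ℝ) r, DifferentiableAt ℝ g t := fun t ht =>
    (((hgs.mono (fun y hy => (hball hy).2)).contDiffAt (hop.mem_nhds ht))).differentiableAt (by norm_num)
  have hev : ∀ᶠ t in nhds (0:ℝ), deriv (fun t => f t - c * g t) t = deriv f t - c * deriv g t := by
    filter_upwards [hop.mem_nhds (Metric.mem_ball_self hr)] with t ht
    rw [deriv_fun_sub (hfd t ht) ((hgd t ht).const_mul c), deriv_const_mul c (hgd t ht)]
  rw [Filter.EventuallyEq.deriv_eq hev]
  have hf1 : DifferentiableAt ℝ (deriv f) 0 := differentiableAt_deriv_of_contDiffAt hf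
  have hg1 : DifferentiableAt ℝ (deriv g) 0 := differentiableAt_deriv_of_contDiffAt hg
  rw [deriv_fun_sub hf1 (hg1.const_mul c), deriv_const_mul c hg1]

lemma contDiffAt_affine_rpow (a b q : ℝ) (ha : 0 < a) :
    ContDiffAt ℝ 2 (fun t : ℝ => (a + b*t) ^ q) 0 := by
  have h1 : ContDiffAt ℝ 2 (fun t : ℝ => a + b*t) 0 := by fun_prop
  apply ContDiffAt.rpow_const_of_ne h1
  norm_num; exact ne_of_gt ha

lemma contDiffAt_quad_rpow (a b q : ℝ) (ha : 0 < a) :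
    ContDiffAt ℝ 2 (fun t : ℝ => (a + b*t + t^2) ^ q) 0 := by
  have h1 : ContDiffAt ℝ 2 (fun t : ℝ => a + b*t + t^2) 0 := by fun_prop
  apply ContDiffAt.rpow_const_of_ne h1
  norm_num; exact ne_of_gt ha

lemma deriv2_affine_rpow (a b q : ℝ) (ha : 0 < a) :
    deriv (deriv (fun t : ℝ => (a + b*t) ^ q)) 0 = q*(q-1)*a^(q-2)*b^2 := by
  have hev : ∀ᶠ t in nhds (0:ℝ), 0 < a + b*t := by
    have : ContinuousAt (fun t : ℝ => a + b*t) 0 := by fun_prop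
    have h0 : (0:ℝ) < a + b*0 := by norm_num; exact ha
    exact this.tendsto.eventually (eventually_gt_nhds h0)
  have hd1 : ∀ᶠ t in nhds (0:ℝ),
      deriv (fun t : ℝ => (a + b*t) ^ q) t = b * q * (a + b*t)^(q-1) := by
    filter_upwards [hev] with t ht
    have hP : HasDerivAt (fun t : ℝ => a + b*t) b t := by
      simpa using ((hasDerivAt_id t).const_mul b).const_add a
    exact (hP.rpow_const (Or.inl (ne_of_gt ht))).deriv
  rw [Filter.EventuallyEq.deriv_eq hd1]
  have hP0 : HasDerivAt (fun t : ℝ => a + b*t) b 0 := by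
    simpa using ((hasDerivAt_id (0:ℝ)).const_mul b).const_add a
  have h2 : HasDerivAt (fun t : ℝ => (a + b*t)^(q-1)) (b * (q-1) * a^(q-2)) 0 := by
    have := hP0.rpow_const (p := q-1) (Or.inl (by norm_num; exact ne_of_gt ha))
    norm_num at this
    convert this using 2
    ring_nf
  have h3 : HasDerivAt (fun t : ℝ => b * q * (a + b*t)^(q-1)) (b * q * (b * (q-1) * a^(q-2))) 0 :=
    h2.const_mul (b*q)
  rw [h3.deriv]; ring

lemma deriv2_quad_rpow (a b q : ℝ) (ha : 0 < a) :
    deriv (deriv (fun t : ℝ => (a + b*t + t^2) ^ q)) 0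
      = q*(q-1)*a^(q-2)*b^2 + 2*q*a^(q-1) := by
  have hPd : ∀ t : ℝ, HasDerivAt (fun t : ℝ => a + b*t + t^2) (b + 2*t) t := by
    intro t
    have h1 : HasDerivAt (fun t : ℝ => a + b*t) b t := by
      simpa using ((hasDerivAt_id t).const_mul b).const_add a
    have h2 : HasDerivAt (fun t : ℝ => t^2) (2*t) t := by
      simpa using hasDerivAt_pow 2 t
    exact h1.add h2
  have hcont : ContinuousAt (fun t : ℝ => a + b*t + t^2) 0 := by fun_prop
  have hev : ∀ᶠ t in nhds (0:ℝ), 0 < a + b*t + t^2 := by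
    have h0 : (0:ℝ) < a + b*0 + 0^2 := by norm_num; exact ha
    exact hcont.tendsto.eventually (eventually_gt_nhds h0)
  have hd1 : ∀ᶠ t in nhds (0:ℝ),
      deriv (fun t : ℝ => (a + b*t + t^2) ^ q) t
        = (b + 2*t) * (q * (a + b*t + t^2)^(q-1)) := by
    filter_upwards [hev] with t ht
    have := ((hPd t).rpow_const (p := q) (Or.inl (ne_of_gt ht))).deriv
    rw [this]; ring
  rw [Filter.EventuallyEq.deriv_eq hd1]
  have h1 : HasDerivAt (fun t : ℝ => b + 2*t) 2 0 := by
    simpa using ((hasDerivAt_id (0:ℝ)).const_mul 2).const_add b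
  have h2 : HasDerivAt (fun t : ℝ => (a + b*t + t^2)^(q-1)) (b * (q-1) * a^(q-2)) 0 := by
    have := (hPd 0).rpow_const (p := q-1) (Or.inl (by norm_num; exact ne_of_gt ha))
    norm_num at this
    convert this using 2
    ring_nf
  have h2' : HasDerivAt (fun t : ℝ => q * (a + b*t + t^2)^(q-1)) (q * (b * (q-1) * a^(q-2))) 0 :=
    h2.const_mul q
  have h3 := h1.mul h2'
  rw [HasDerivAt.deriv (f := fun t : ℝ => (b + 2*t) * (q * (a + b*t + t^2)^(q-1))) h3]
  norm_num
  ring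

lemma deriv2_quad_neg (r2 a b : ℝ) :
    deriv (deriv (fun t : ℝ => r2 - (a + b*t + t^2))) 0 = -2 := by
  have hPd : ∀ t : ℝ, HasDerivAt (fun t : ℝ => r2 - (a + b*t + t^2)) (-(b + 2*t)) t := by
    intro t
    have h1 : HasDerivAt (fun t : ℝ => a + b*t) b t := by
      simpa using ((hasDerivAt_id t).const_mul b).const_add a
    have h2 : HasDerivAt (fun t : ℝ => t^2) (2*t) t := by
      simpa using hasDerivAt_pow 2 t
    exact (h1.add h2).const_sub r2
  have hd1 : ∀ᶠ t in nhds (0:ℝ),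
      deriv (fun t : ℝ => r2 - (a + b*t + t^2)) t = -(b + 2*t) :=
    Filter.Eventually.of_forall (fun t => (hPd t).deriv)
  rw [Filter.EventuallyEq.deriv_eq hd1]
  have h1 : HasDerivAt (fun t : ℝ => -(b + 2*t)) (-2) 0 := by
    have : HasDerivAt (fun t : ℝ => b + 2*t) 2 0 := by
      simpa using ((hasDerivAt_id (0:ℝ)).const_mul 2).const_add b
    exact this.neg
  rw [h1.deriv]

noncomputable def barrier (d : ℕ) (c A α : ℝ) (y : EuclideanSpace ℝ (Fin (d+1))) : ℝ :=
  y (Fin.last d) + (c * (y (Fin.last d)) ^ (1+α) - A * (‖y‖^2) ^ ((1+α)/2))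

lemma coord_le_norm {d : ℕ} (x : EuclideanSpace ℝ (Fin (d+1))) (i : Fin (d+1)) :
    x i ≤ ‖x‖ := by
  have h := real_inner_le_norm x (EuclideanSpace.single i 1)
  rw [EuclideanSpace.inner_single_right] at h
  simpa [EuclideanSpace.norm_single] using h

lemma barrier_contDiffAt {d : ℕ} (c A α : ℝ) {x : EuclideanSpace ℝ (Fin (d+1))}
    (hx : 0 < x (Fin.last d)) : ContDiffAt ℝ 2 (barrier d c A α) x := by
  have hxn : 0 < ‖x‖ := lt_of_lt_of_le hx (coord_le_norm x _)
  have hproj : ContDiffAt ℝ 2 (fun y : EuclideanSpace ℝ (Fin (d+1)) => y (Fin.last d)) x :=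
    (EuclideanSpace.proj (𝕜 := ℝ) (Fin.last d)).contDiff.contDiffAt
  have h1 : ContDiffAt ℝ 2 (fun y : EuclideanSpace ℝ (Fin (d+1)) => (y (Fin.last d)) ^ (1+α)) x :=
    hproj.rpow_const_of_ne (ne_of_gt hx)
  have hnsq : ContDiffAt ℝ 2 (fun y : EuclideanSpace ℝ (Fin (d+1)) => ‖y‖^2) x :=
    (contDiff_norm_sq ℝ).contDiffAt
  have h2 : ContDiffAt ℝ 2 (fun y : EuclideanSpace ℝ (Fin (d+1)) => (‖y‖^2) ^ ((1+α)/2)) x :=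
    hnsq.rpow_const_of_ne (by positivity)
  exact hproj.add ((contDiffAt_const.mul h1).sub (contDiffAt_const.mul h2))

lemma coord_add_smul_single {d : ℕ} (x : EuclideanSpace ℝ (Fin (d+1))) (i j : Fin (d+1)) (t : ℝ) :
    (x + t • EuclideanSpace.single i (1:ℝ) : EuclideanSpace ℝ (Fin (d+1))) j
      = x j + (if j = i then 1 else 0) * t := by
  rw [PiLp.add_apply, PiLp.smul_apply, EuclideanSpace.single_apply]
  split <;> simp [mul_comm]

lemma normsq_add_smul_single {d : ℕ} (x : EuclideanSpace ℝ (Fin (d+1))) (i : Fin (d+1)) (t : ℝ) :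
    ‖x + t • EuclideanSpace.single i (1:ℝ)‖^2 = ‖x‖^2 + (2 * x i) * t + t^2 := by
  rw [norm_add_sq_real]
  rw [real_inner_smul_right, EuclideanSpace.inner_single_right]
  rw [norm_smul, EuclideanSpace.norm_single]
  simp [mul_pow, sq_abs]
  ring

lemma deriv2_combo {g h : ℝ → ℝ} (e f c A : ℝ) (hg : ContDiffAt ℝ 2 g 0) (hh : ContDiffAt ℝ 2 h 0) :
    deriv (deriv (fun t => (e + f*t) + (c * g t - A * h t))) 0
      = c * deriv (deriv g) 0 - A * deriv (deriv h) 0 := by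
  obtain ⟨s, hs, hgs⟩ := hg.contDiffOn (le_refl 2) (by simp)
  obtain ⟨s', hs', hhs⟩ := hh.contDiffOn (le_refl 2) (by simp)
  obtain ⟨r, hr, hball⟩ := Metric.mem_nhds_iff.1 (inter_mem hs hs')
  have hop : IsOpen (Metric.ball (0:ℝ) r) := Metric.isOpen_ball
  have hgd : ∀ t ∈ Metric.ball (0:ℝ) r, DifferentiableAt ℝ g t := fun t ht =>
    (((hgs.mono (fun y hy => (hball hy).1)).contDiffAt (hop.mem_nhds ht))).differentiableAt (by norm_num)
  have hhd : ∀ t ∈ Metric.ball (0:ℝ) r, DifferentiableAt ℝ h t := fun t ht =>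
    (((hhs.mono (fun y hy => (hball hy).2)).contDiffAt (hop.mem_nhds ht))).differentiableAt (by norm_num)
  have hev : ∀ᶠ t in nhds (0:ℝ),
      deriv (fun t => (e + f*t) + (c * g t - A * h t)) t
        = f + (c * deriv g t - A * deriv h t) := by
    filter_upwards [hop.mem_nhds (Metric.mem_ball_self hr)] with t ht
    have h1 : HasDerivAt (fun t : ℝ => e + f*t) f t := by
      simpa using ((hasDerivAt_id t).const_mul f).const_add e
    have h2 : HasDerivAt g (deriv g t) t := (hgd t ht).hasDerivAt
    have h3 : HasDerivAt h (deriv h t) t := (hhd t ht).hasDerivAt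
    exact (h1.add ((h2.const_mul c).sub (h3.const_mul A))).deriv
  rw [Filter.EventuallyEq.deriv_eq hev]
  have hg1 : DifferentiableAt ℝ (deriv g) 0 := differentiableAt_deriv_of_contDiffAt hg
  have hh1 : DifferentiableAt ℝ (deriv h) 0 := differentiableAt_deriv_of_contDiffAt hh
  rw [deriv_const_add, deriv_fun_sub ((hg1).const_mul c) ((hh1).const_mul A),
    deriv_const_mul c hg1, deriv_const_mul A hh1]

lemma lap_barrier {d : ℕ} {α c A : ℝ} (hα0 : 0 < α) (hα1 : α < 1) (hA : 0 < A)
    (hcA : c * α = A * (α + d)) {x : EuclideanSpace ℝ (Fin (d+1))}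
    (hx : 0 < x (Fin.last d)) : 0 ≤ lap (barrier d c A α) x := by
  set X := x (Fin.last d) with hX
  have hxn : 0 < ‖x‖ := lt_of_lt_of_le hx (coord_le_norm x _)
  set Q : ℝ := ‖x‖^2 with hQ
  have hQpos : 0 < Q := by positivity
  rw [lap_eq_sum_slice (barrier_contDiffAt c A α hx)]
  have hslice : ∀ i : Fin (d+1),
      deriv (deriv (fun t : ℝ => barrier d c A α (x + t • EuclideanSpace.single i 1))) 0
        = c * ((1+α)*((1+α)-1)*X^((1+α)-2)*(if (Fin.last d : Fin (d+1)) = i then (1:ℝ) else 0)^2)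
          - A * (((1+α)/2)*(((1+α)/2)-1)*Q^(((1+α)/2)-2)*(2*x i)^2 + 2*((1+α)/2)*Q^(((1+α)/2)-1)) := by
    intro i
    have hfun : (fun t : ℝ => barrier d c A α (x + t • EuclideanSpace.single i 1))
        = fun t : ℝ => (X + (if (Fin.last d : Fin (d+1)) = i then (1:ℝ) else 0)*t)
            + (c * ((X + (if (Fin.last d : Fin (d+1)) = i then (1:ℝ) else 0)*t) ^ (1+α))
              - A * ((Q + (2 * x i)*t + t^2) ^ ((1+α)/2))) := by
      funext t
      simp only [barrier, coord_add_smul_single, normsq_add_smul_single, hX, hQ]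
    rw [hfun,
      deriv2_combo _ _ _ _ (contDiffAt_affine_rpow X _ (1+α) hx)
        (contDiffAt_quad_rpow Q (2 * x i) ((1+α)/2) hQpos),
      deriv2_affine_rpow X _ (1+α) hx, deriv2_quad_rpow Q (2 * x i) ((1+α)/2) hQpos]
  rw [Finset.sum_congr rfl (fun i _ => hslice i)]
  rw [Finset.sum_sub_distrib]
  have hsum1 : ∑ i : Fin (d+1),
      c * ((1+α)*((1+α)-1)*X^((1+α)-2)*(if (Fin.last d : Fin (d+1)) = i then (1:ℝ) else 0)^2)
      = c * ((1+α)*α*X^(α-1)) := by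
    rw [← Finset.mul_sum]
    have : ∀ i : Fin (d+1), (if (Fin.last d : Fin (d+1)) = i then (1:ℝ) else 0)^2
        = if (Fin.last d : Fin (d+1)) = i then (1:ℝ) else 0 := by
      intro i; split <;> norm_num
    rw [show ((1+α)-2) = α - 1 by ring]
    simp only [this, mul_ite, mul_one, mul_zero]
    rw [Finset.sum_ite_eq, if_pos (Finset.mem_univ _)]
    ring
  have hsumsq : ∑ i : Fin (d+1), (2 * x i)^2 = 4 * Q := by
    have hnorm : ∑ i : Fin (d+1), (x i)^2 = Q := by
      rw [hQ, EuclideanSpace.norm_eq, Real.sq_sqrt (by positivity)]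
      congr 1; funext i; rw [Real.norm_eq_abs, sq_abs]
    calc ∑ i : Fin (d+1), (2 * x i)^2 = ∑ i : Fin (d+1), 4 * (x i)^2 := by
          congr 1; funext i; ring
    _ = 4 * ∑ i : Fin (d+1), (x i)^2 := by rw [Finset.mul_sum]
    _ = 4 * Q := by rw [hnorm]
  have hsum2 : ∑ i : Fin (d+1),
      A * (((1+α)/2)*(((1+α)/2)-1)*Q^(((1+α)/2)-2)*(2*x i)^2 + 2*((1+α)/2)*Q^(((1+α)/2)-1))
      = A * (((1+α)/2)*(((1+α)/2)-1)*Q^(((1+α)/2)-2)*(4*Q) + (d+1)*(2*((1+α)/2)*Q^(((1+α)/2)-1))) := by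
    rw [← Finset.mul_sum, Finset.sum_add_distrib]
    congr 2
    · rw [← Finset.mul_sum, hsumsq]
    · rw [Finset.sum_const, Finset.card_univ, Fintype.card_fin]
      simp [nsmul_eq_mul]
  rw [hsum1, hsum2]
  have e1 : Q^(((1+α)/2)-2)*Q = Q^(((1+α)/2)-1) := by
    rw [← Real.rpow_add_one (ne_of_gt hQpos) (((1+α)/2)-2)]
    congr 1; ring
  have e2 : Q^(((1+α)/2)-1) = ‖x‖^(α-1) := by
    rw [hQ, ← Real.rpow_natCast ‖x‖ 2, ← Real.rpow_mul (norm_nonneg x)]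
    congr 1; push_cast; ring
  have hle : ‖x‖^(α-1) ≤ X^(α-1) :=
    Real.rpow_le_rpow_of_nonpos hx (coord_le_norm x _) (by linarith)
  have key : c * ((1+α)*α*X^(α-1))
      - A * (((1+α)/2)*(((1+α)/2)-1)*Q^(((1+α)/2)-2)*(4*Q) + (d+1)*(2*((1+α)/2)*Q^(((1+α)/2)-1)))
      = (1+α) * (A*(α+d)) * (X^(α-1) - ‖x‖^(α-1)) := by
    rw [← e2]
    linear_combination ((1+α)*X^(α-1)) * hcA - (A*(1+α)*(α-1)) * e1
  rw [key]
  have : 0 ≤ X^(α-1) - ‖x‖^(α-1) := by linarith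
  positivity

lemma contDiffAt_quadfn {d : ℕ} (r2 : ℝ) (x₀ x : EuclideanSpace ℝ (Fin (d+1))) :
    ContDiffAt ℝ 2 (fun y : EuclideanSpace ℝ (Fin (d+1)) => r2 - ‖y - x₀‖^2) x := by
  apply ContDiffAt.sub contDiffAt_const
  exact ((contDiff_norm_sq ℝ).comp (contDiff_id.sub contDiff_const)).contDiffAt

lemma lap_quad {d : ℕ} (r2 : ℝ) (x₀ x : EuclideanSpace ℝ (Fin (d+1))) :
    lap (fun y => r2 - ‖y - x₀‖^2) x = -(2*(d+1)) := by
  rw [lap_eq_sum_slice (contDiffAt_quadfn r2 x₀ x)]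
  have hslice : ∀ i : Fin (d+1),
      deriv (deriv (fun t : ℝ => r2 - ‖(x + t • EuclideanSpace.single i 1) - x₀‖^2)) 0 = -2 := by
    intro i
    have hfun : (fun t : ℝ => r2 - ‖(x + t • EuclideanSpace.single i 1) - x₀‖^2)
        = fun t : ℝ => r2 - (‖x - x₀‖^2 + (2 * (x - x₀) i)*t + t^2) := by
      funext t
      have : (x + t • EuclideanSpace.single i 1) - x₀
          = (x - x₀) + t • EuclideanSpace.single i (1:ℝ) := by abel
      rw [this, normsq_add_smul_single]
    rw [hfun, deriv2_quad_neg]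
  rw [Finset.sum_congr rfl (fun i _ => hslice i), Finset.sum_const, Finset.card_univ,
    Fintype.card_fin, nsmul_eq_mul]
  push_cast; ring

lemma lap_sub_smul {d : ℕ} {u v : EuclideanSpace ℝ (Fin (d+1)) → ℝ} (c : ℝ)
    {x : EuclideanSpace ℝ (Fin (d+1))} (hu : ContDiffAt ℝ 2 u x) (hv : ContDiffAt ℝ 2 v x) :
    lap (fun y => u y - c * v y) x = lap u x - c * lap v x := by
  rw [lap_eq_sum_slice (hu.sub (contDiffAt_const.mul hv)),
    lap_eq_sum_slice hu, lap_eq_sum_slice hv]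
  rw [Finset.mul_sum, ← Finset.sum_sub_distrib]
  apply Finset.sum_congr rfl
  intro i _
  exact deriv2_sub_smul c (contDiffAt_slice _ hu) (contDiffAt_slice _ hv)

lemma barrier_continuous (d : ℕ) (c A α : ℝ) (hα : 0 < α) :
    Continuous (barrier d c A α) := by
  rw [continuous_iff_continuousAt]
  intro x
  unfold barrier
  have hc : ContinuousAt (fun y : EuclideanSpace ℝ (Fin (d+1)) => y (Fin.last d)) x :=
    (EuclideanSpace.proj (𝕜 := ℝ) (Fin.last d)).continuous.continuousAt
  have h1 : ContinuousAt (fun y : EuclideanSpace ℝ (Fin (d+1)) => (y (Fin.last d)) ^ (1+α)) x :=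
    ContinuousAt.comp (Real.continuousAt_rpow_const _ _ (Or.inr (by linarith))) hc
  have hns : ContinuousAt (fun y : EuclideanSpace ℝ (Fin (d+1)) => ‖y‖^2) x := by fun_prop
  have h2 : ContinuousAt (fun y : EuclideanSpace ℝ (Fin (d+1)) => (‖y‖^2) ^ ((1+α)/2)) x :=
    ContinuousAt.comp (Real.continuousAt_rpow_const _ _ (Or.inr (by linarith))) hns
  exact hc.add ((continuousAt_const.mul h1).sub (continuousAt_const.mul h2))

lemma interior_bound {d : ℕ} {U : Set (EuclideanSpace ℝ (Fin (d+1)))} (hU : IsOpen U)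
    {u : EuclideanSpace ℝ (Fin (d+1)) → ℝ} (hu : ContDiffOn ℝ 2 u U)
    (hupos : ∀ x ∈ U, 0 < u x) {c₀ : ℝ} (hc₀ : 0 < c₀)
    (hlap : ∀ x ∈ U, lap u x ≤ -c₀) {x₀ : EuclideanSpace ℝ (Fin (d+1))} {r : ℝ} (hr : 0 < r)
    (hball : Metric.closedBall x₀ r ⊆ U) :
    c₀/(4*((d:ℝ)+1)) * r^2 ≤ u x₀ := by
  set β : ℝ := c₀/(4*((d:ℝ)+1)) with hβ
  have hd1 : (0:ℝ) < (d:ℝ)+1 := by positivity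
  have hβpos : 0 < β := by positivity
  set g : EuclideanSpace ℝ (Fin (d+1)) → ℝ := fun y => u y - β * (r^2 - ‖y - x₀‖^2) with hg
  have hgc : ContinuousOn g (Metric.closedBall x₀ r) := by
    apply ContinuousOn.sub
    · exact (hu.continuousOn).mono hball
    · apply Continuous.continuousOn; fun_prop
  obtain ⟨y₀, hy₀mem, hy₀min⟩ := (isCompact_closedBall x₀ r).exists_isMinOn
      (Metric.nonempty_closedBall.2 hr.le) hgc
  have hx₀mem : x₀ ∈ Metric.closedBall x₀ r := Metric.mem_closedBall_self hr.le
  have hkey : 0 ≤ g y₀ := by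
    rcases lt_or_eq_of_le (Metric.mem_closedBall.1 hy₀mem) with hlt | heq
    · exfalso
      have hy₀U : y₀ ∈ U := hball hy₀mem
      have hloc : IsLocalMin g y₀ :=
        hy₀min.isLocalMin (Filter.mem_of_superset
          (Metric.isOpen_ball.mem_nhds (Metric.mem_ball.2 hlt)) Metric.ball_subset_closedBall)
      have huC2 : ContDiffAt ℝ 2 u y₀ := hu.contDiffAt (hU.mem_nhds hy₀U)
      have hlapg : lap g y₀ = lap u y₀ - β * (-(2*((d:ℝ)+1))) := by
        rw [hg, lap_sub_smul β huC2 (contDiffAt_quadfn _ _ _), lap_quad]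
      have h0 : 0 ≤ lap g y₀ :=
        lap_nonneg_of_isLocalMin (huC2.sub (contDiffAt_const.mul (contDiffAt_quadfn _ _ _))) hloc
      rw [hlapg] at h0
      have h1 := hlap y₀ hy₀U
      have hβval : β * (2*((d:ℝ)+1)) = c₀/2 := by rw [hβ]; field_simp; ring
      nlinarith
    · have h1 : 0 < u y₀ := hupos y₀ (hball hy₀mem)
      have h2 : ‖y₀ - x₀‖ = r := by rw [← dist_eq_norm]; exact heq
      rw [hg]; simp only [h2]; simp; linarith
  have h3 : g y₀ ≤ g x₀ := hy₀min hx₀mem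
  have h4 : g x₀ = u x₀ - β * r^2 := by rw [hg]; simp
  linarith [h3, hkey, h4.symm.le]

lemma abs_coord_le_norm {d : ℕ} (x : EuclideanSpace ℝ (Fin (d+1))) (i : Fin (d+1)) :
    |x i| ≤ ‖x‖ := by
  rw [abs_le]
  constructor
  · have := coord_le_norm (-x) i
    rw [PiLp.neg_apply, norm_neg] at this
    linarith
  · exact coord_le_norm x i

lemma sq_rpow_half (a q : ℝ) (ha : 0 ≤ a) : (a^2) ^ (q/2) = a ^ q := by
  rw [← Real.rpow_natCast a 2, ← Real.rpow_mul ha]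
  congr 1; push_cast; ring

lemma sfn_le_norm {d : ℕ} (x : EuclideanSpace ℝ (Fin (d+1))) :
    Real.sqrt (∑ i : Fin d, x (Fin.castSucc i) ^ 2) ≤ ‖x‖ := by
  rw [EuclideanSpace.norm_eq]
  apply Real.sqrt_le_sqrt
  rw [Fin.sum_univ_castSucc]
  have h1 : ∀ j : Fin (d+1), ‖x j‖^2 = x j ^ 2 := fun j => by
    rw [Real.norm_eq_abs, sq_abs]
  simp only [h1]
  nlinarith [sq_nonneg (x (Fin.last d))]

lemma sfn_continuous {d : ℕ} :
    Continuous (fun x : EuclideanSpace ℝ (Fin (d+1)) =>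
      Real.sqrt (∑ i : Fin d, x (Fin.castSucc i) ^ 2)) := by
  apply Real.continuous_sqrt.comp
  apply continuous_finset_sum
  intro i _
  have : Continuous (fun x : EuclideanSpace ℝ (Fin (d+1)) => x (Fin.castSucc i)) :=
    (EuclideanSpace.proj (𝕜 := ℝ) (Fin.castSucc i)).continuous
  exact this.pow 2

lemma graphfn_continuous {d : ℕ} (C₀ α : ℝ) (hα : 0 < α) :
    Continuous (fun x : EuclideanSpace ℝ (Fin (d+1)) =>
      C₀ * (Real.sqrt (∑ i : Fin d, x (Fin.castSucc i) ^ 2)) ^ (1 + α)) := by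
  apply continuous_const.mul
  have hrpow : Continuous (fun y : ℝ => y ^ (1+α)) := by
    rw [continuous_iff_continuousAt]
    exact fun y => Real.continuousAt_rpow_const _ _ (Or.inr (by linarith))
  exact hrpow.comp sfn_continuous

lemma hopfDomain_isOpen {d : ℕ} (r₀ C₀ α : ℝ) (hα : 0 < α) :
    IsOpen (hopfDomain d r₀ C₀ α) := by
  have h1 : IsOpen {x : EuclideanSpace ℝ (Fin (d+1)) | x ∈ Metric.ball 0 r₀} :=
    Metric.isOpen_ball
  have h2 : IsOpen {x : EuclideanSpace ℝ (Fin (d+1)) |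
      C₀ * (Real.sqrt (∑ i : Fin d, x (Fin.castSucc i) ^ 2)) ^ (1 + α) < x (Fin.last d)} :=
    isOpen_lt (graphfn_continuous C₀ α hα) (EuclideanSpace.proj (𝕜 := ℝ) (Fin.last d)).continuous
  exact h1.inter h2

lemma hopfDomain_coord_pos {d : ℕ} {r₀ C₀ α : ℝ} (hC₀ : 0 ≤ C₀)
    {x : EuclideanSpace ℝ (Fin (d+1))} (hx : x ∈ hopfDomain d r₀ C₀ α) :
    0 < x (Fin.last d) := by
  have h0 : 0 ≤ C₀ * (Real.sqrt (∑ i : Fin d, x (Fin.castSucc i) ^ 2)) ^ (1 + α) :=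
    mul_nonneg hC₀ (Real.rpow_nonneg (Real.sqrt_nonneg _) _)
  exact lt_of_le_of_lt h0 hx.2

/-- quantitative Hopf lemma on a `C^{1,α}` graph domain. -/
theorem quantitative_hopf {d : ℕ} (r₀ c₀ C₀ α : ℝ)
    (hr₀ : 0 < r₀) (hc₀ : 0 < c₀) (hC₀ : 0 < C₀) (hα : α ∈ Set.Ioo (0:ℝ) 1) :
    ∃ ε > (0:ℝ), ∃ δ > (0:ℝ),
      ∀ u : EuclideanSpace ℝ (Fin (d + 1)) → ℝ,
        ContDiffOn ℝ 2 u (hopfDomain d r₀ C₀ α) →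
        (∀ x ∈ hopfDomain d r₀ C₀ α, 0 < u x) →
        (∀ x ∈ hopfDomain d r₀ C₀ α, lap u x ≤ -c₀) →
        u 0 = 0 →
        ∀ h ∈ Set.Ioo (0:ℝ) δ,
          ε * h ≤ u (h • EuclideanSpace.single (Fin.last d) 1) := by
  obtain ⟨hα0, hα1⟩ := hα
  set A : ℝ := 16*(C₀+1) with hA
  have hApos : 0 < A := by positivity
  have hαd : (0:ℝ) < α + d := by positivity
  set c : ℝ := A*(α+d)/α with hc
  have hcpos : 0 < c := by positivity
  have hcA : c * α = A * (α + (d:ℝ)) := by rw [hc]; field_simp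
  have hcge : A ≤ c := by
    rw [hc, le_div_iff₀ hα0]
    nlinarith [Nat.cast_nonneg (α := ℝ) d]
  set β : ℝ := c₀/(4*((d:ℝ)+1)) with hβ
  have hβpos : 0 < β := by positivity
  set ρ : ℝ := min (r₀/2) ((1/c) ^ (1/α)) with hρ
  have hρpos : 0 < ρ := lt_min (by positivity) (Real.rpow_pos_of_pos (by positivity) _)
  have hρr₀ : ρ ≤ r₀/2 := min_le_left _ _
  have hcρ : c * ρ ^ α ≤ 1 := by
    have h1 : ρ ^ α ≤ ((1/c)^(1/α)) ^ α :=
      Real.rpow_le_rpow hρpos.le (min_le_right _ _) hα0.le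
    have h2 : ((1/c)^(1/α)) ^ α = 1/c := by
      rw [← Real.rpow_mul (by positivity), one_div α, inv_mul_cancel₀ (ne_of_gt hα0),
        Real.rpow_one]
    rw [h2] at h1
    calc c * ρ ^ α ≤ c * (1/c) := by nlinarith
    _ = 1 := by field_simp
  have hρ1α : 0 < ρ ^ (1+α) := Real.rpow_pos_of_pos hρpos _
  set ε : ℝ := β*(C₀+1)*ρ^(1+α) with hε
  have hεpos : 0 < ε := by positivity
  refine ⟨ε, hεpos, ρ, hρpos, ?_⟩
  intro u hu hupos hlapu hu0 h hh
  obtain ⟨hh0, hhρ⟩ := hh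
  have hDopen : IsOpen (hopfDomain d r₀ C₀ α) := hopfDomain_isOpen r₀ C₀ α hα0
  obtain ⟨b, hbdef⟩ : ∃ b : EuclideanSpace ℝ (Fin (d+1)) → ℝ, b = barrier d c A α := ⟨_, rfl⟩
  have hbcont : Continuous b := hbdef ▸ barrier_continuous d c A α hα0
  obtain ⟨w, hw⟩ : ∃ w : EuclideanSpace ℝ (Fin (d+1)) → ℝ,
      w = fun y => u y - ε * b y := ⟨_, rfl⟩
  have hwcont : ∀ z ∈ hopfDomain d r₀ C₀ α, ContinuousAt w z := by
    intro z hz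
    rw [hw]
    exact ((hu.contDiffAt (hDopen.mem_nhds hz)).continuousAt).sub
      (continuousAt_const.mul hbcont.continuousAt)
  have hbar_le : ∀ X : ℝ, 0 ≤ X → X ≤ ρ → c * X^(1+α) ≤ X := by
    intro X h0 hXρ
    have h1 : X^(1+α) = X^(1:ℝ) * X^α := Real.rpow_add' h0 (by positivity)
    rw [h1, Real.rpow_one]
    have h2 : X ^ α ≤ ρ ^ α := Real.rpow_le_rpow h0 hXρ hα0.le
    nlinarith [mul_le_mul_of_nonneg_left h2 (mul_nonneg hcpos.le h0),
      mul_le_mul_of_nonneg_left hcρ h0]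
  have hbval : ∀ x : EuclideanSpace ℝ (Fin (d+1)),
      b x = x (Fin.last d) + (c * (x (Fin.last d))^(1+α) - A * ‖x‖^(1+α)) := by
    intro x
    rw [hbdef]
    unfold barrier
    rw [sq_rpow_half ‖x‖ (1+α) (norm_nonneg x)]
  -- negativity of the barrier on / below the graph
  have hbar_graph : ∀ x : EuclideanSpace ℝ (Fin (d+1)), ‖x‖ ≤ ρ →
      x (Fin.last d) ≤ C₀ * (Real.sqrt (∑ i : Fin d, x (Fin.castSucc i) ^ 2)) ^ (1 + α) →
      0 ≤ x (Fin.last d) → b x ≤ 0 := by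
    intro x hxρ hxg hX0
    have hs : Real.sqrt (∑ i : Fin d, x (Fin.castSucc i) ^ 2) ≤ ‖x‖ := sfn_le_norm x
    have h2 : x (Fin.last d) ≤ C₀ * ‖x‖^(1+α) := by
      refine le_trans hxg (mul_le_mul_of_nonneg_left ?_ hC₀.le)
      exact Real.rpow_le_rpow (Real.sqrt_nonneg _) hs (by linarith)
    have h3 : c * (x (Fin.last d))^(1+α) ≤ x (Fin.last d) :=
      hbar_le _ hX0 (le_trans (coord_le_norm x _) hxρ)
    have h5 : 0 ≤ ‖x‖^(1+α) := Real.rpow_nonneg (norm_nonneg x) _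
    rw [hbval x]
    nlinarith
  -- the sphere estimate
  have hsphere : ∀ x : EuclideanSpace ℝ (Fin (d+1)), x ∈ hopfDomain d r₀ C₀ α →
      ‖x‖ = ρ → 0 ≤ w x := by
    intro x hxD hxρ
    set X := x (Fin.last d) with hXdef
    have hXpos : 0 < X := hopfDomain_coord_pos hC₀.le hxD
    have hXρ : X ≤ ρ := by rw [← hxρ]; exact coord_le_norm x _
    have h3 : c * X^(1+α) ≤ X := hbar_le X hXpos.le hXρ
    have hbx : b x ≤ 2*X - A * ρ^(1+α) := by
      rw [hbval x, hxρ]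
      linarith
    rcases le_or_gt (b x) 0 with hb0 | hb0
    · have : 0 < u x := hupos x hxD
      rw [hw]; simp only
      nlinarith
    · -- b x > 0 forces X large
      have hX8 : 8*(C₀+1)*ρ^(1+α) < X := by
        have : A * ρ^(1+α) < 2*X := by linarith
        rw [hA] at this; linarith
      -- the closed ball around x of radius X/2 is in the domain
      have hballD : Metric.closedBall x (X/2) ⊆ hopfDomain d r₀ C₀ α := by
        intro y hy
        have hyx : ‖y - x‖ ≤ X/2 := by
          rw [← dist_eq_norm]; exact Metric.mem_closedBall.1 hy
        have hyn : ‖y‖ ≤ ρ + X/2 := by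
          have := norm_add_le x (y - x)
          rw [add_sub_cancel] at this
          rw [hxρ] at this; linarith
        have hyρ : ‖y‖ ≤ 3*ρ/2 := by linarith
        have hylast : X/2 ≤ y (Fin.last d) := by
          have h6 : |(y - x) (Fin.last d)| ≤ ‖y - x‖ := abs_coord_le_norm _ _
          have h7 : (y - x) (Fin.last d) = y (Fin.last d) - X := by
            rw [PiLp.sub_apply, hXdef]
          rw [h7, abs_le] at h6
          linarith [h6.1]
        simp only [hopfDomain, Set.mem_setOf_eq]
        constructor
        · rw [mem_ball_zero_iff]
          calc ‖y‖ ≤ 3*ρ/2 := hyρ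
          _ ≤ 3*(r₀/2)/2 := by linarith
          _ < r₀ := by linarith
        · -- graph condition for y
          have hsy : Real.sqrt (∑ i : Fin d, y (Fin.castSucc i) ^ 2) ≤ 3*ρ/2 :=
            le_trans (sfn_le_norm y) hyρ
          have h8 : (Real.sqrt (∑ i : Fin d, y (Fin.castSucc i) ^ 2)) ^ (1+α)
              ≤ (3*ρ/2) ^ (1+α) :=
            Real.rpow_le_rpow (Real.sqrt_nonneg _) hsy (by linarith)
          have h9 : (3*ρ/2 : ℝ) ^ (1+α) = (3/2 : ℝ)^(1+α) * ρ^(1+α) := by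
            rw [← Real.mul_rpow (by norm_num) hρpos.le]
            congr 1; ring
          have h10 : (3/2 : ℝ)^(1+α) ≤ (3/2 : ℝ)^(2:ℝ) :=
            Real.rpow_le_rpow_of_exponent_le (by norm_num) (by linarith)
          have h11 : (3/2 : ℝ)^(2:ℝ) = 9/4 := by
            rw [show (2:ℝ) = ((2:ℕ):ℝ) by norm_num, Real.rpow_natCast]
            norm_num
          have h12 : C₀ * (Real.sqrt (∑ i : Fin d, y (Fin.castSucc i) ^ 2)) ^ (1+α)
              ≤ C₀ * (9/4) * ρ^(1+α) := by
            rw [h11] at h10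
            calc C₀ * (Real.sqrt (∑ i : Fin d, y (Fin.castSucc i) ^ 2)) ^ (1+α)
                ≤ C₀ * ((3*ρ/2) ^ (1+α)) := mul_le_mul_of_nonneg_left h8 hC₀.le
            _ = C₀ * ((3/2 : ℝ)^(1+α) * ρ^(1+α)) := by rw [h9]
            _ ≤ C₀ * ((9/4) * ρ^(1+α)) := by
                apply mul_le_mul_of_nonneg_left _ hC₀.le
                exact mul_le_mul_of_nonneg_right h10 hρ1α.le
            _ = C₀ * (9/4) * ρ^(1+α) := by ring
          have h13 : C₀ * (9/4) * ρ^(1+α) < X/2 := by nlinarith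
          calc C₀ * (Real.sqrt (∑ i : Fin d, y (Fin.castSucc i) ^ 2)) ^ (1+α)
              ≤ C₀ * (9/4) * ρ^(1+α) := h12
          _ < X/2 := h13
          _ ≤ y (Fin.last d) := hylast
      -- interior bound
      have hub : β * (X/2)^2 ≤ u x := by
        have := interior_bound hDopen hu hupos hc₀ hlapu (by positivity) hballD
        rw [← hβ] at this
        exact this
      rw [hw]; simp only
      -- 0 ≤ u x - ε * b x
      have hbub : b x ≤ 2*X := by nlinarith
      have hεb : ε * b x ≤ ε * (2*X) := mul_le_mul_of_nonneg_left hbub hεpos.le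
      have hXsq : 8*(C₀+1)*ρ^(1+α) * X ≤ X * X :=
        mul_le_mul_of_nonneg_right hX8.le hXpos.le
      have h16 : ε * (2*X) ≤ β * (X/2)^2 := by
        rw [hε]
        nlinarith [mul_le_mul_of_nonneg_left hXsq hβpos.le]
      linarith
  have hP_nonneg : ∀ x : EuclideanSpace ℝ (Fin (d+1)),
      0 ≤ C₀ * (Real.sqrt (∑ i : Fin d, x (Fin.castSucc i) ^ 2)) ^ (1 + α) :=
    fun x => mul_nonneg hC₀.le (Real.rpow_nonneg (Real.sqrt_nonneg _) _)
  -- the axis point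
  set z : EuclideanSpace ℝ (Fin (d+1)) := h • EuclideanSpace.single (Fin.last d) 1 with hz
  have hzlast : z (Fin.last d) = h := by
    rw [hz, PiLp.smul_apply, EuclideanSpace.single_apply, if_pos rfl, smul_eq_mul, mul_one]
  have hznorm : ‖z‖ = h := by
    rw [hz, norm_smul, EuclideanSpace.norm_single]
    simp [abs_of_pos hh0]
  have hzcast : ∀ i : Fin d, z (Fin.castSucc i) = 0 := by
    intro i
    rw [hz, PiLp.smul_apply, EuclideanSpace.single_apply, if_neg, smul_eq_mul, mul_zero]
    exact (Fin.castSucc_lt_last i).ne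
  have hzD : z ∈ hopfDomain d r₀ C₀ α := by
    simp only [hopfDomain, Set.mem_setOf_eq]
    constructor
    · rw [mem_ball_zero_iff, hznorm]; linarith
    · have hsz : ∑ i : Fin d, z (Fin.castSucc i)^2 = 0 := by
        apply Finset.sum_eq_zero; intro i _; rw [hzcast i]; ring
      rw [hsz, Real.sqrt_zero, Real.zero_rpow (by positivity), mul_zero, hzlast]
      exact hh0
  have hbz : h ≤ b z := by
    rw [hbval z, hzlast, hznorm]
    nlinarith [Real.rpow_nonneg hh0.le (1+α), hcge]
  have hwz : 0 ≤ w z := by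
    by_contra hneg
    push_neg at hneg
    obtain ⟨m, hm⟩ : ∃ m : ℝ, m = w z := ⟨_, rfl⟩
    have hmneg : m < 0 := by rw [hm]; exact hneg
    have hm2 : m / 2 < 0 := by linarith
    set Dρ : Set (EuclideanSpace ℝ (Fin (d+1))) :=
      hopfDomain d r₀ C₀ α ∩ Metric.ball 0 ρ with hDρ
    have hDρopen : IsOpen Dρ := hDopen.inter Metric.isOpen_ball
    set S : Set (EuclideanSpace ℝ (Fin (d+1))) := {y | y ∈ Dρ ∧ w y ≤ m/2} with hS
    have hSsubD : S ⊆ hopfDomain d r₀ C₀ α := fun y hy => hy.1.1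
    have hzDρ : z ∈ Dρ := ⟨hzD, mem_ball_zero_iff.2 (by rw [hznorm]; exact hhρ)⟩
    have hzS : z ∈ S := ⟨hzDρ, by rw [hm]; linarith⟩
    have hKsub : closure S ⊆ Metric.closedBall 0 ρ ∩
        {y : EuclideanSpace ℝ (Fin (d+1)) |
          C₀ * (Real.sqrt (∑ i : Fin d, y (Fin.castSucc i) ^ 2)) ^ (1 + α) ≤ y (Fin.last d)} := by
      apply closure_minimal
      · intro y hy
        exact ⟨Metric.ball_subset_closedBall hy.1.2, le_of_lt hy.1.1.2⟩
      · exact (Metric.isClosed_closedBall (x := (0 : EuclideanSpace ℝ (Fin (d+1)))) (ε := ρ)).inter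
          (isClosed_le (graphfn_continuous C₀ α hα0)
            (EuclideanSpace.proj (𝕜 := ℝ) (Fin.last d)).continuous)
    have hbpos_cl : ∀ y ∈ closure S, 0 < b y := by
      intro y hy
      have hsub : closure S ⊆ {q : EuclideanSpace ℝ (Fin (d+1)) | -(m/2) ≤ ε * b q} := by
        apply closure_minimal
        · intro q hq
          have h1 : 0 < u q := hupos q (hSsubD hq)
          have h2 : w q ≤ m/2 := hq.2
          rw [hw] at h2; simp only at h2
          simp only [Set.mem_setOf_eq]
          linarith
        · exact isClosed_le continuous_const (continuous_const.mul hbcont)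
      have h3 : -(m/2) ≤ ε * b y := hsub hy
      have h4 : 0 < ε * b y := lt_of_lt_of_le (by linarith) h3
      rcases mul_pos_iff.1 h4 with ⟨_, hb⟩ | ⟨hε1, _⟩
      · exact hb
      · exact absurd hεpos (not_lt.2 hε1.le)
    have hScl : closure S ⊆ S := by
      intro q hq
      obtain ⟨hqball, hqgraph'⟩ := hKsub hq
      have hqgraph : C₀ * (Real.sqrt (∑ i : Fin d, q (Fin.castSucc i) ^ 2)) ^ (1 + α)
          ≤ q (Fin.last d) := hqgraph'
      have hqρ : ‖q‖ ≤ ρ := mem_closedBall_zero_iff.1 hqball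
      rcases lt_or_eq_of_le hqgraph with hqlt | hqeq
      · have hqD : q ∈ hopfDomain d r₀ C₀ α := by
          simp only [hopfDomain, Set.mem_setOf_eq]
          exact ⟨mem_ball_zero_iff.2 (lt_of_le_of_lt hqρ (by linarith)), hqlt⟩
        have hwq : w q ≤ m/2 := by
          have hne : (nhdsWithin q S).NeBot := mem_closure_iff_nhdsWithin_neBot.1 hq
          have ht : Tendsto w (nhdsWithin q S) (nhds (w q)) :=
            ((hwcont q hqD).continuousWithinAt).tendsto
          exact le_of_tendsto ht (eventually_nhdsWithin_of_forall (fun y hy => hy.2))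
        rcases lt_or_eq_of_le hqρ with hqρlt | hqρeq
        · exact ⟨⟨hqD, mem_ball_zero_iff.2 hqρlt⟩, hwq⟩
        · exfalso
          have h5 := hsphere q hqD hqρeq
          linarith
      · exfalso
        have h0q : 0 ≤ q (Fin.last d) := le_trans (hP_nonneg q) (le_of_eq hqeq)
        have hneg' : b q ≤ 0 := hbar_graph q hqρ (le_of_eq hqeq.symm) h0q
        exact absurd (hbpos_cl q hq) (not_lt.2 hneg')
    have hSclosed : IsClosed S := isClosed_of_closure_subset hScl
    have hScompact : IsCompact S :=
      (isCompact_closedBall (0 : EuclideanSpace ℝ (Fin (d+1))) ρ).of_isClosed_subset hSclosed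
        (fun y hy => Metric.ball_subset_closedBall hy.1.2)
    have hwcontS : ContinuousOn w S := fun y hy => (hwcont y (hSsubD hy)).continuousWithinAt
    obtain ⟨y₀, hy₀S, hy₀min⟩ := hScompact.exists_isMinOn ⟨z, hzS⟩ hwcontS
    have hminDρ : IsMinOn w Dρ y₀ := by
      rw [isMinOn_iff]
      intro y hy
      rcases le_or_gt (w y) (m/2) with h1 | h1
      · exact hy₀min ⟨hy, h1⟩
      · have h2 : w y₀ ≤ m/2 := hy₀S.2
        linarith
    have hlocmin : IsLocalMin w y₀ := hminDρ.isLocalMin (hDρopen.mem_nhds hy₀S.1)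
    have hy₀D : y₀ ∈ hopfDomain d r₀ C₀ α := hy₀S.1.1
    have hy₀pos : 0 < y₀ (Fin.last d) := hopfDomain_coord_pos hC₀.le hy₀D
    have huy₀ : ContDiffAt ℝ 2 u y₀ := hu.contDiffAt (hDopen.mem_nhds hy₀D)
    have hby₀ : ContDiffAt ℝ 2 b y₀ := by
      rw [hbdef]; exact barrier_contDiffAt c A α hy₀pos
    have h0lap : 0 ≤ lap w y₀ := by
      apply lap_nonneg_of_isLocalMin _ hlocmin
      rw [hw]
      exact huy₀.sub (contDiffAt_const.mul hby₀)
    have hlapw : lap w y₀ = lap u y₀ - ε * lap b y₀ := by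
      rw [hw]
      exact lap_sub_smul ε huy₀ hby₀
    have hlapb : 0 ≤ lap b y₀ := by
      rw [hbdef]
      exact lap_barrier hα0 hα1 hApos hcA hy₀pos
    have hlapu' := hlapu y₀ hy₀D
    nlinarith [mul_nonneg hεpos.le hlapb]
  have hfin : ε * b z ≤ u z := by
    rw [hw] at hwz; simp only at hwz; linarith
  calc ε * h ≤ ε * b z := mul_le_mul_of_nonneg_left hbz hεpos.le
  _ ≤ u z := hfin
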